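/- arXiv:1708.05647 — 4 statements merged into one kernel-verified Lean document; each statement's English description precedes it below -/
import Mathlib

section
/- Let D ⊆ ℝ^r be a union of linear subspaces, each of which contains the vector (1,1,...,1). Then the intersection ∂[0,1]^r ∩ D of D with the boundary of the unit cube is homeomorphic to the intersection S^{r-1} ∩ D of D with the unit sphere in ℝ^r. -/
lemma aux_frontier_cube (r : ℕ) :
    frontier {x : EuclideanSpace ℝ (Fin r) | ∀ i, x i ∈ Set.Icc (0 : ℝ) 1}
      = {x : EuclideanSpace ℝ (Fin r) |
          (∀ i, x i ∈ Set.Icc (0 : ℝ) 1) ∧ ∃ i, x i = 0 ∨ x i = 1} := by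
  set C : Set (EuclideanSpace ℝ (Fin r)) :=
    {x | ∀ i, x i ∈ Set.Icc (0 : ℝ) 1} with hC
  have hcont : ∀ i : Fin r, Continuous fun x : EuclideanSpace ℝ (Fin r) => x i :=
    fun i => PiLp.continuous_apply 2 (fun _ : Fin r => ℝ) i
  have hclosed : IsClosed C := by
    have : C = ⋂ i, (fun x : EuclideanSpace ℝ (Fin r) => x i) ⁻¹' Set.Icc (0:ℝ) 1 := by
      ext x; simp [hC, Set.mem_iInter]
    rw [this]
    exact isClosed_iInter fun i => isClosed_Icc.preimage (hcont i)
  have hint : interior C = {x : EuclideanSpace ℝ (Fin r) | ∀ i, x i ∈ Set.Ioo (0:ℝ) 1} := by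
    apply subset_antisymm
    · intro x hx i
      have h1 : interior C ⊆ interior ((fun y : EuclideanSpace ℝ (Fin r) => y i) ⁻¹' Set.Icc (0:ℝ) 1) :=
        interior_mono fun y hy => hy i
      have h2 : (fun y : EuclideanSpace ℝ (Fin r) => y i) ⁻¹' interior (Set.Icc (0:ℝ) 1)
          = interior ((fun y : EuclideanSpace ℝ (Fin r) => y i) ⁻¹' Set.Icc (0:ℝ) 1) :=
        (PiLp.isOpenMap_apply 2 (fun _ : Fin r => ℝ) i).preimage_interior_eq_interior_preimage (hcont i) (Set.Icc (0:ℝ) 1)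
      have := h1 hx
      rw [← h2, interior_Icc] at this
      exact this
    · apply interior_maximal
      · intro x hx i
        exact Set.Ioo_subset_Icc_self (hx i)
      · have : {x : EuclideanSpace ℝ (Fin r) | ∀ i, x i ∈ Set.Ioo (0:ℝ) 1}
            = ⋂ i, (fun x : EuclideanSpace ℝ (Fin r) => x i) ⁻¹' Set.Ioo (0:ℝ) 1 := by
          ext x; simp [Set.mem_iInter]
        rw [this]
        exact isOpen_iInter_of_finite fun i => isOpen_Ioo.preimage (hcont i)
  rw [hclosed.frontier_eq, hint]
  ext x
  simp only [Set.mem_diff, Set.mem_setOf_eq, hC, not_forall]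
  constructor
  · rintro ⟨h1, i, h2⟩
    refine ⟨h1, i, ?_⟩
    have := h1 i
    simp only [Set.mem_Icc] at this
    simp only [Set.mem_Ioo, not_and_or, not_lt] at h2
    rcases h2 with h | h
    · left; linarith
    · right; linarith
  · rintro ⟨h1, i, h2⟩
    refine ⟨h1, i, ?_⟩
    simp only [Set.mem_Ioo, not_and_or, not_lt]
    rcases h2 with h | h
    · left; linarith
    · right; linarith

/-- Let `D ⊆ ℝ^r` be a finite union of linear subspaces, each containing the
all-ones vector `𝟙`.  Then `∂[0,1]^r ∩ D` is homeomorphic to `S^{r-1} ∩ D`, where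
`∂[0,1]^r` is the boundary of the unit cube and `S^{r-1}` the unit sphere in `ℝ^r`. -/
theorem cubeBoundary_inter_homeomorph_sphere_inter
    (r : ℕ) (ℋ : Finset (Submodule ℝ (EuclideanSpace ℝ (Fin r))))
    (hones : ∀ H ∈ ℋ, WithLp.toLp 2 (fun _ : Fin r => (1 : ℝ)) ∈ H) :
    Nonempty
      (↥(frontier {x : EuclideanSpace ℝ (Fin r) | ∀ i, x i ∈ Set.Icc (0 : ℝ) 1} ∩
          (⋃ H ∈ ℋ, (H : Set (EuclideanSpace ℝ (Fin r))))) ≃ₜ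
        ↥(Metric.sphere (0 : EuclideanSpace ℝ (Fin r)) 1 ∩
          (⋃ H ∈ ℋ, (H : Set (EuclideanSpace ℝ (Fin r)))))) := by
  classical
  set E := EuclideanSpace ℝ (Fin r) with hE
  set D : Set E := ⋃ H ∈ ℋ, (H : Set E) with hD
  set C : Set E := {x : E | ∀ i, x i ∈ Set.Icc (0 : ℝ) 1} with hC
  set c : E := WithLp.toLp 2 (fun _ => (1/2 : ℝ)) with hc
  have hcmem : ∀ H ∈ ℋ, c ∈ H := by
    intro H hH
    have h := H.smul_mem (1/2 : ℝ) (hones H hH)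
    have : c = (1/2 : ℝ) • (WithLp.toLp 2 (fun _ : Fin r => (1:ℝ)) : E) := by
      ext i; simp [hc]
    rwa [this]
  have hDmem : ∀ x ∈ D, ∀ t s : ℝ, t • x + s • c ∈ D := by
    intro x hx t s
    simp only [hD, Set.mem_iUnion] at hx ⊢
    obtain ⟨H, hH, hxH⟩ := hx
    exact ⟨H, hH, H.add_mem (H.smul_mem t hxH) (H.smul_mem s (hcmem H hH))⟩
  rcases isEmpty_or_nonempty (Fin r) with hEmp | hNe
  · have h1 : frontier C = ∅ := by
      have : C = Set.univ := by
        rw [Set.eq_univ_iff_forall]; intro x i; exact (hEmp.false i).elim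
      rw [this, frontier_univ]
    have h2 : Metric.sphere (0 : E) 1 = ∅ := by
      ext x
      have hx0 : x = 0 := by ext i; exact (hEmp.false i).elim
      simp [hx0]
    exact ⟨Homeomorph.setCongr (by rw [h1, h2])⟩
  · -- main case
    set m : E → ℝ := fun x => Finset.univ.sup' Finset.univ_nonempty (fun i => |x i|) with hm
    have hm_le : ∀ (x : E) i, |x i| ≤ m x := by
      intro x i
      simp only [hm]
      exact Finset.le_sup' (fun j : Fin r => |x j|) (Finset.mem_univ i)
    have hm_ex : ∀ x : E, ∃ i, m x = |x i| := by
      intro x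
      simp only [hm]
      obtain ⟨i, _, hi⟩ := Finset.exists_mem_eq_sup' (Finset.univ_nonempty (α := Fin r)) (fun i => |x i|)
      exact ⟨i, hi⟩
    have hm_nonneg : ∀ x : E, 0 ≤ m x :=
      fun x => le_trans (abs_nonneg _) (hm_le x (Classical.arbitrary _))
    have hm_pos : ∀ x : E, x ≠ 0 → 0 < m x := by
      intro x hx
      rcases (hm_nonneg x).lt_or_eq with h | h
      · exact h
      · exfalso; apply hx; ext i
        have h1 := hm_le x i
        rw [← h] at h1
        have : x i = 0 := abs_eq_zero.mp (le_antisymm h1 (abs_nonneg _))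
        simpa using this
    have hm_cont : Continuous m := by
      simp only [hm]
      exact Continuous.finset_sup'_apply Finset.univ_nonempty (fun i _ => (PiLp.continuous_apply 2 (fun _ : Fin r => ℝ) i).abs)
    have happly_smul : ∀ (t : ℝ) (v : E) (i : Fin r), (t • v) i = t * v i := fun _ _ _ => rfl
    have happly_sub : ∀ (u v : E) (i : Fin r), (u - v) i = u i - v i := fun _ _ _ => rfl
    have hm_bdd : ∀ (v : E) (B : ℝ), (∀ i, |v i| ≤ B) → m v ≤ B := by
      intro v B h
      simp only [hm]
      exact Finset.sup'_le _ _ (fun i _ => h i)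
    have hm_smul : ∀ (t : ℝ) (x : E), 0 ≤ t → m (t • x) = t * m x := by
      intro t x ht
      apply le_antisymm
      · apply hm_bdd
        intro i
        have : |(t • x) i| = t * |x i| := by
          rw [happly_smul, abs_mul, abs_of_nonneg ht]
        rw [this]
        exact mul_le_mul_of_nonneg_left (hm_le x i) ht
      · obtain ⟨i, hi⟩ := hm_ex x
        rw [hi]
        have : t * |x i| = |(t • x) i| := by rw [happly_smul, abs_mul, abs_of_nonneg ht]
        rw [this]
        exact hm_le _ i
    -- coordinates of c + v
    have hcoord : ∀ (v : E) (i : Fin r), (c + v) i = 1/2 + v i := fun _ _ => rfl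
    -- forward map membership
    have hf : ∀ x ∈ Metric.sphere (0 : E) 1 ∩ D, c + (2 * m x)⁻¹ • x ∈ frontier C ∩ D := by
      rintro x ⟨hxs, hxD⟩
      have hxn : ‖x‖ = 1 := by simpa using hxs
      have hx0 : x ≠ 0 := by intro h; rw [h] at hxn; simp at hxn
      have hmx := hm_pos x hx0
      have h2m : (0:ℝ) < 2 * m x := by linarith
      constructor
      · rw [aux_frontier_cube]
        constructor
        · intro i
          have h1 : |x i| ≤ m x := hm_le x i
          have hkey : (2 * m x)⁻¹ * m x = 1/2 := by
            rw [inv_mul_eq_div, div_eq_iff h2m.ne']; ring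
          have habs : |(2 * m x)⁻¹ * x i| ≤ 1/2 := by
            rw [abs_mul, abs_of_nonneg (le_of_lt (inv_pos.mpr h2m))]
            have := mul_le_mul_of_nonneg_left h1 (le_of_lt (inv_pos.mpr h2m))
            linarith [hkey]
          have habs' : |((2 * m x)⁻¹ • x) i| ≤ 1/2 := by
            rw [happly_smul]; exact habs
          rw [hcoord]
          rw [abs_le] at habs'
          constructor <;> [linarith [habs'.1]; linarith [habs'.2]]
        · obtain ⟨i, hi⟩ := hm_ex x
          refine ⟨i, ?_⟩
          rw [hcoord]
          have hxi : x i = m x ∨ x i = -(m x) := abs_eq (hm_nonneg x) |>.mp hi.symm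
          have hsm : ((2 * m x)⁻¹ • x) i = (2 * m x)⁻¹ * x i := happly_smul _ _ _
          have hkey : (2 * m x)⁻¹ * m x = 1/2 := by
            rw [inv_mul_eq_div, div_eq_iff h2m.ne']; ring
          rcases hxi with h | h
          · right; rw [hsm, h, hkey]; norm_num
          · left; rw [hsm, h, mul_neg, hkey]; norm_num
      · have := hDmem x hxD ((2 * m x)⁻¹) 1
        rw [one_smul] at this
        rwa [add_comm] at this
    -- backward map membership
    have hg : ∀ y ∈ frontier C ∩ D, ‖y - c‖⁻¹ • (y - c) ∈ Metric.sphere (0 : E) 1 ∩ D := by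
      rintro y ⟨hyF, hyD⟩
      rw [aux_frontier_cube] at hyF
      obtain ⟨hIcc, i, hi⟩ := hyF
      have hyc : y - c ≠ 0 := by
        intro h
        have h0 : (y - c) i = 0 := by rw [h]; rfl
        have h2 : y i - 1/2 = 0 := h0
        rcases hi with h' | h' <;> rw [h'] at h2 <;> norm_num at h2
      have hnc : ‖y - c‖ ≠ 0 := norm_ne_zero_iff.mpr hyc
      constructor
      · simp only [mem_sphere_zero_iff_norm]
        rw [norm_smul, norm_inv, norm_norm]
        field_simp
      · have := hDmem y hyD (‖y - c‖⁻¹) (-‖y - c‖⁻¹)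
        rwa [neg_smul, ← sub_eq_add_neg, ← smul_sub] at this
    -- m (y - c) = 1/2 for y in frontier
    have hmyc : ∀ y ∈ frontier C, m (y - c) = 1/2 := by
      intro y hyF
      rw [aux_frontier_cube] at hyF
      obtain ⟨hIcc, i, hi⟩ := hyF
      have hvi : ∀ j, (y - c) j = y j - 1/2 := fun _ => rfl
      apply le_antisymm
      · apply hm_bdd
        intro j
        rw [hvi j, abs_le]
        have := hIcc j
        simp only [Set.mem_Icc] at this
        constructor <;> linarith [this.1, this.2]
      · have : |(y - c) i| = 1/2 := by
          rw [hvi i]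
          rcases hi with h | h <;> rw [h] <;> norm_num
        rw [← this]
        exact hm_le _ i
    -- the homeomorphism
    refine ⟨{
      toFun := fun y => ⟨‖(y : E) - c‖⁻¹ • ((y : E) - c), hg y y.2⟩
      invFun := fun x => ⟨c + (2 * m (x : E))⁻¹ • (x : E), hf x x.2⟩
      left_inv := ?_
      right_inv := ?_
      continuous_toFun := ?_
      continuous_invFun := ?_ }⟩
    · rintro ⟨y, hy⟩
      apply Subtype.ext
      simp only
      have hyF := hy.1
      rw [aux_frontier_cube] at hyF
      obtain ⟨hIcc, i, hi⟩ := hyF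
      have hyc : y - c ≠ 0 := by
        intro h
        have h0 : (y - c) i = 0 := by rw [h]; rfl
        have h2 : y i - 1/2 = 0 := h0
        rcases hi with h' | h' <;> rw [h'] at h2 <;> norm_num at h2
      have hnc : ‖y - c‖ ≠ 0 := norm_ne_zero_iff.mpr hyc
      have hnn : (0:ℝ) ≤ ‖y - c‖⁻¹ := inv_nonneg.mpr (norm_nonneg _)
      rw [hm_smul _ _ hnn, hmyc y hy.1]
      have h2m : 2 * (‖y - c‖⁻¹ * (1/2)) = ‖y - c‖⁻¹ := by ring
      rw [h2m, inv_inv, smul_smul, mul_inv_cancel₀ hnc, one_smul]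
      abel
    · rintro ⟨x, hx⟩
      apply Subtype.ext
      simp only
      have hxn : ‖x‖ = 1 := by simpa using hx.1
      have hx0 : x ≠ 0 := by intro h; rw [h] at hxn; simp at hxn
      have hmx := hm_pos x hx0
      have h2m : (2 * m x) ≠ 0 := by positivity
      rw [add_sub_cancel_left, norm_smul, norm_inv, hxn, mul_one,
        Real.norm_eq_abs, abs_of_pos (by positivity : (0:ℝ) < 2 * m x),
        inv_inv, smul_smul, mul_inv_cancel₀ h2m, one_smul]
    · apply Continuous.subtype_mk
      have h1 : Continuous fun y : ↥(frontier C ∩ D) => (y : E) - c :=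
        continuous_subtype_val.sub continuous_const
      refine Continuous.smul (Continuous.inv₀ h1.norm ?_) h1
      rintro ⟨y, hy⟩
      have hyF := hy.1
      rw [aux_frontier_cube] at hyF
      obtain ⟨hIcc, i, hi⟩ := hyF
      refine norm_ne_zero_iff.mpr ?_
      intro h
      have h0 : (y - c) i = 0 := by rw [h]; rfl
      have h2 : y i - 1/2 = 0 := h0
      rcases hi with h' | h' <;> rw [h'] at h2 <;> norm_num at h2
    · apply Continuous.subtype_mk
      have h1 : Continuous fun x : ↥(Metric.sphere (0:E) 1 ∩ D) => (x : E) :=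
        continuous_subtype_val
      refine continuous_const.add (Continuous.smul (f := fun x : ↥(Metric.sphere (0:E) 1 ∩ D) => (2 * m (x : E))⁻¹) (Continuous.inv₀ ?_ ?_) h1)
      · exact (continuous_const.mul (hm_cont.comp h1))
      · rintro ⟨x, hx⟩
        have hxn : ‖x‖ = 1 := by simpa using hx.1
        have hx0 : x ≠ 0 := by intro h; rw [h] at hxn; simp at hxn
        have := hm_pos x hx0
        simp only [Function.comp]
        positivity
end

section
/- Let S = {x ∈ [0,1]^r : min_i x_i = 0 and max_i x_i = 1} for r ≥ 2. Then S is homeomorphic to the sphere S^{r-2}. -/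
open Set

namespace GPS

variable {m : ℕ}

/-- sup of the positive parts of coordinates, as a Pi sup norm. -/
noncomputable def P (y : Fin m → ℝ) : ℝ := ‖(fun j => max (y j) 0 : Fin m → ℝ)‖

lemma P_nonneg (y : Fin m → ℝ) : 0 ≤ P y := norm_nonneg _

lemma le_P (y : Fin m → ℝ) (j : Fin m) : y j ≤ P y :=
  (le_max_left _ _).trans <| (le_abs_self _).trans <| norm_le_pi_norm (fun j => max (y j) 0) j

lemma max_le_P (y : Fin m → ℝ) (j : Fin m) : max (y j) 0 ≤ P y :=
  (le_abs_self _).trans <| norm_le_pi_norm (fun j => max (y j) 0) j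

lemma P_le (y : Fin m → ℝ) {c : ℝ} (hc : 0 ≤ c) (h : ∀ j, y j ≤ c) : P y ≤ c := by
  refine pi_norm_le_iff_of_nonneg hc |>.2 fun j => ?_
  rw [Real.norm_eq_abs, abs_of_nonneg (le_max_right _ _)]
  exact max_le (h j) hc

lemma P_exists_eq (y : Fin (m + 1) → ℝ) : ∃ j, P y = max (y j) 0 := by
  obtain ⟨j, -, hj⟩ := Finset.exists_mem_eq_sup Finset.univ Finset.univ_nonempty
    (fun i => ‖max (y i) 0‖₊)
  refine ⟨j, ?_⟩
  rw [P, Pi.norm_def, hj, coe_nnnorm, Real.norm_of_nonneg (le_max_right _ _)]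

lemma P_add_le (y z : Fin m → ℝ) : P (fun j => y j + z j) ≤ P y + P z := by
  refine P_le _ (add_nonneg (P_nonneg y) (P_nonneg z)) fun j => ?_
  exact add_le_add (le_P y j) (le_P z j)

lemma P_smul (c : ℝ) (hc : 0 ≤ c) (y : Fin m → ℝ) : P (fun j => c * y j) = c * P y := by
  have : (fun j => max (c * y j) 0 : Fin m → ℝ) = c • (fun j => max (y j) 0) := by
    funext j; simp only [Pi.smul_apply, smul_eq_mul, mul_max_of_nonneg _ _ hc, mul_zero]
  rw [P, this, norm_smul, Real.norm_eq_abs, abs_of_nonneg hc]; rfl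

lemma P_continuous : Continuous (fun y : Fin m → ℝ => P y) := by
  apply Continuous.norm
  exact continuous_pi fun j => (continuous_apply j).max continuous_const

end GPS

namespace GPS

variable {n : ℕ}

/-- The "max minus min" norm-like functional. -/
noncomputable def g (y : EuclideanSpace ℝ (Fin (n + 1))) : ℝ :=
  P (fun j => y j) + P (fun j => -(y j))

lemma g_nonneg (y : EuclideanSpace ℝ (Fin (n + 1))) : 0 ≤ g y :=
  add_nonneg (P_nonneg _) (P_nonneg _)

lemma g_continuous : Continuous (fun y : EuclideanSpace ℝ (Fin (n + 1)) => g y) := by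
  have h1 : Continuous fun y : EuclideanSpace ℝ (Fin (n + 1)) => (fun j => y j : Fin (n+1) → ℝ) :=
    continuous_pi fun j => (continuous_apply j).comp (PiLp.continuous_ofLp 2 _)
  have h2 : Continuous fun y : EuclideanSpace ℝ (Fin (n + 1)) =>
      (fun j => -(y j) : Fin (n+1) → ℝ) :=
    continuous_pi fun j => ((continuous_apply j).comp (PiLp.continuous_ofLp 2 _)).neg
  exact (P_continuous.comp h1).add (P_continuous.comp h2)

lemma g_zero : g (0 : EuclideanSpace ℝ (Fin (n + 1))) = 0 := by
  have : ∀ s : Fin (n+1) → ℝ, s = 0 → P s = 0 := by rintro s rfl; simp [P]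
  simp only [g]
  rw [this _ (by funext j; simp), this _ (by funext j; simp), add_zero]

lemma g_smul (c : ℝ) (hc : 0 ≤ c) (y : EuclideanSpace ℝ (Fin (n + 1))) :
    g (c • y) = c * g y := by
  have hs : ∀ j, (c • y) j = c * y j := fun j => rfl
  simp only [g, hs]
  rw [show (fun j => -(c * y j)) = (fun j => c * (-(y j))) by funext j; ring,
    P_smul c hc, P_smul c hc]
  ring

lemma g_add_le (y z : EuclideanSpace ℝ (Fin (n + 1))) : g (y + z) ≤ g y + g z := by
  have hs : ∀ j, (y + z) j = y j + z j := fun j => rfl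
  simp only [g, hs]
  have h1 := P_add_le (fun j => y j) (fun j => z j)
  have h2 := P_add_le (fun j => -(y j)) (fun j => -(z j))
  simp only [neg_add] at *
  calc P (fun j => y j + z j) + P (fun j => -(y j) + -(z j))
      ≤ (P (fun j => y j) + P (fun j => z j)) + (P (fun j => -(y j)) + P (fun j => -(z j))) :=
        add_le_add h1 h2
    _ = _ := by ring

end GPS

namespace GPS

variable {n : ℕ}

noncomputable def K (n : ℕ) : Set (EuclideanSpace ℝ (Fin (n + 1))) := {y | g y ≤ 1}

lemma K_convex : Convex ℝ (K n) := by
  intro y hy z hz a b ha hb hab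
  calc g (a • y + b • z) ≤ g (a • y) + g (b • z) := g_add_le _ _
    _ = a * g y + b * g z := by rw [g_smul a ha, g_smul b hb]
    _ ≤ a * 1 + b * 1 := add_le_add (mul_le_mul_of_nonneg_left (hy : g y ≤ 1) ha)
        (mul_le_mul_of_nonneg_left (hz : g z ≤ 1) hb)
    _ = 1 := by linarith

lemma K_closed : IsClosed (K n) := isClosed_le g_continuous continuous_const

lemma K_bounded : Bornology.IsBounded (K n) := by
  refine isBounded_iff_forall_norm_le.2 ⟨Real.sqrt (n + 1), fun y hy => ?_⟩
  have hb : ∀ j, ‖y j‖ ≤ 1 := by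
    intro j
    have h1 : y j ≤ 1 := (le_P (fun j => y j) j).trans (le_add_of_nonneg_right (P_nonneg _)
      |>.trans hy)
    have h2 : -(y j) ≤ 1 := (le_P (fun j => -(y j)) j).trans
      ((le_add_of_nonneg_left (P_nonneg _)).trans hy)
    rw [Real.norm_eq_abs, abs_le]; constructor <;> linarith
  rw [EuclideanSpace.norm_eq]
  refine Real.sqrt_le_sqrt ?_
  calc ∑ j, ‖y j‖ ^ 2 ≤ ∑ _j : Fin (n+1), (1:ℝ) := Finset.sum_le_sum fun j _ => by
        have := hb j; nlinarith [norm_nonneg (y j)]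
    _ = (n + 1 : ℝ) := by simp
    _ = ((n:ℝ) + 1) := by norm_num

lemma K_interior : interior (K n) = {y | g y < 1} := by
  apply subset_antisymm
  · intro y hy
    by_contra hlt
    have hyK : y ∈ K n := interior_subset hy
    have hy1 : g y = 1 := le_antisymm hyK (not_lt.1 hlt)
    obtain ⟨δ, hδ, hball⟩ := Metric.isOpen_iff.1 isOpen_interior y hy
    have hy0 : y ≠ 0 := by intro h; rw [h, g_zero] at hy1; norm_num at hy1
    have hyn : 0 < ‖y‖ := norm_pos_iff.2 hy0
    set t : ℝ := min (δ / (2 * ‖y‖)) 1 with ht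
    have ht0 : 0 < t := lt_min (by positivity) one_pos
    have hmem : (1 + t) • y ∈ Metric.ball y δ := by
      rw [Metric.mem_ball, dist_eq_norm]
      have : (1 + t) • y - y = t • y := by module
      rw [this, norm_smul, Real.norm_eq_abs, abs_of_pos ht0]
      calc t * ‖y‖ ≤ δ / (2 * ‖y‖) * ‖y‖ := by
            apply mul_le_mul_of_nonneg_right (min_le_left _ _) hyn.le
        _ = δ / 2 := by field_simp
        _ < δ := by linarith
    have := interior_subset (hball hmem)
    rw [K, mem_setOf_eq, g_smul _ (by linarith), hy1, mul_one] at this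
    linarith
  · exact (isOpen_lt g_continuous continuous_const).subset_interior_iff.2 fun y (hy : g y < 1) => le_of_lt hy

lemma K_frontier : frontier (K n) = {y | g y = 1} := by
  rw [K_closed.frontier_eq, K_interior]
  ext y
  simp only [mem_diff, K, mem_setOf_eq, not_lt]
  constructor
  · rintro ⟨h1, h2⟩; linarith
  · rintro h; exact ⟨h.le, h.ge⟩

lemma K_interior_nonempty : (interior (K n)).Nonempty := by
  rw [K_interior]
  exact ⟨0, by simp [g_zero]⟩

end GPS

namespace GPS

variable {n : ℕ}

noncomputable def tOf (y : EuclideanSpace ℝ (Fin (n + 1))) : ℝ := P (fun j => -(y j))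

noncomputable def fwdFun (x : EuclideanSpace ℝ (Fin (n + 2))) : EuclideanSpace ℝ (Fin (n + 1)) :=
  WithLp.toLp 2 (fun j : Fin (n + 1) => x j.succ - x 0)

noncomputable def bwdFun (y : EuclideanSpace ℝ (Fin (n + 1))) : EuclideanSpace ℝ (Fin (n + 2)) :=
  WithLp.toLp 2 (fun i => Fin.cases (tOf y) (fun j => y j + tOf y) i : Fin (n + 2) → ℝ)

lemma fwdFun_apply (x : EuclideanSpace ℝ (Fin (n + 2))) (j : Fin (n + 1)) :
    fwdFun x j = x j.succ - x 0 := rfl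

lemma bwdFun_zero (y : EuclideanSpace ℝ (Fin (n + 1))) : bwdFun y 0 = tOf y := rfl

lemma bwdFun_succ (y : EuclideanSpace ℝ (Fin (n + 1))) (j : Fin (n + 1)) :
    bwdFun y j.succ = y j + tOf y := by
  simp [bwdFun]

section Smem
variable {x : EuclideanSpace ℝ (Fin (n + 2))}
  (h01 : ∀ i, x i ∈ Set.Icc (0 : ℝ) 1) (h0 : ∃ i, x i = 0) (h1 : ∃ i, x i = 1)

include h01 h1 in
lemma P_fwd_pos : P (fun j => x j.succ - x 0) = 1 - x 0 := by
  apply le_antisymm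
  · exact P_le _ (by linarith [(h01 0).2]) fun j => by linarith [(h01 j.succ).2]
  · obtain ⟨i, hi⟩ := h1
    induction i using Fin.cases with
    | zero => rw [hi]; simpa using P_nonneg _
    | succ j => calc (1:ℝ) - x 0 = x j.succ - x 0 := by rw [hi]
        _ ≤ _ := le_P (fun j => x j.succ - x 0) j

include h01 h0 in
lemma P_fwd_neg : P (fun j => -(x j.succ - x 0)) = x 0 := by
  apply le_antisymm
  · exact P_le _ (h01 0).1 fun j => by linarith [(h01 j.succ).1]
  · obtain ⟨i, hi⟩ := h0
    induction i using Fin.cases with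
    | zero => rw [hi]; exact P_nonneg _
    | succ j => calc x 0 = -(x j.succ - x 0) := by rw [hi]; ring
        _ ≤ _ := le_P (fun j => -(x j.succ - x 0)) j

include h01 h0 h1 in
lemma g_fwd : g (fwdFun x) = 1 := by
  have hp : ∀ j, (fwdFun x) j = x j.succ - x 0 := fun j => rfl
  simp only [g, hp]
  rw [P_fwd_pos h01 h1, P_fwd_neg h01 h0]
  ring

include h01 h0 in
lemma tOf_fwd : tOf (fwdFun x) = x 0 := P_fwd_neg h01 h0

end Smem

section Gmem
variable {y : EuclideanSpace ℝ (Fin (n + 1))} (hg : g y = 1)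

include hg in
lemma bwd_mem_Icc : ∀ i, bwdFun y i ∈ Set.Icc (0 : ℝ) 1 := by
  have hP : P (fun j => y j) = 1 - tOf y := by
    have : P (fun j => y j) + tOf y = 1 := hg
    linarith
  intro i
  induction i using Fin.cases with
  | zero =>
    rw [bwdFun_zero]
    exact ⟨P_nonneg _, by linarith [P_nonneg (fun j => y j)]⟩
  | succ j =>
    rw [bwdFun_succ]
    have htd : tOf y = P (fun j => -(y j)) := rfl
    constructor
    · linarith [le_P (fun j => -(y j)) j]
    · linarith [le_P (fun j => y j) j]

include hg in
lemma bwd_exists_zero : ∃ i, bwdFun y i = 0 := by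
  have htd : tOf y = P (fun j => -(y j)) := rfl
  rcases eq_or_lt_of_le (P_nonneg (fun j => -(y j)) : (0:ℝ) ≤ tOf y) with ht | ht
  · exact ⟨0, by rw [bwdFun_zero, htd, ← ht]⟩
  · obtain ⟨j, hj⟩ := P_exists_eq (fun j => -(y j))
    have hjy : -(y j) = tOf y := by
      rcases le_or_gt (-(y j)) 0 with h | h
      · rw [max_eq_right h] at hj
        rw [hj] at ht
        exact absurd ht (lt_irrefl 0)
      · rw [max_eq_left h.le] at hj
        exact hj.symm
    exact ⟨j.succ, by rw [bwdFun_succ]; linarith⟩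

include hg in
lemma bwd_exists_one : ∃ i, bwdFun y i = 1 := by
  have hP : P (fun j => y j) = 1 - tOf y := by
    have : P (fun j => y j) + tOf y = 1 := hg
    linarith
  rcases eq_or_lt_of_le (P_nonneg (fun j => y j)) with ht | ht
  · exact ⟨0, by rw [bwdFun_zero]; rw [← ht] at hP; linarith⟩
  · obtain ⟨j, hj⟩ := P_exists_eq (fun j => y j)
    have : y j = P (fun j => y j) := by
      rcases le_or_gt (y j) 0 with h | h
      · rw [max_eq_right h] at hj; rw [hj] at ht; exact absurd ht (lt_irrefl 0)
      · rw [max_eq_left h.le] at hj; exact hj.symm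
    exact ⟨j.succ, by rw [bwdFun_succ]; linarith⟩

end Gmem

lemma fwd_bwd (y : EuclideanSpace ℝ (Fin (n + 1))) : fwdFun (bwdFun y) = y := by
  ext j
  rw [fwdFun_apply, bwdFun_succ, bwdFun_zero]
  ring

lemma bwd_fwd {x : EuclideanSpace ℝ (Fin (n + 2))}
    (h01 : ∀ i, x i ∈ Set.Icc (0 : ℝ) 1) (h0 : ∃ i, x i = 0) :
    bwdFun (fwdFun x) = x := by
  ext i
  induction i using Fin.cases with
  | zero => rw [bwdFun_zero, tOf_fwd h01 h0]
  | succ j => rw [bwdFun_succ, tOf_fwd h01 h0, fwdFun_apply]; ring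

lemma fwd_continuous : Continuous (fwdFun (n := n)) := by
  have h : Continuous (fun x : EuclideanSpace ℝ (Fin (n + 2)) =>
      ((fun j => x j.succ - x 0) : Fin (n + 1) → ℝ)) :=
    continuous_pi fun j => ((continuous_apply j.succ).comp (PiLp.continuous_ofLp 2 _)).sub
      ((continuous_apply (0 : Fin (n+2))).comp (PiLp.continuous_ofLp 2 _))
  exact (PiLp.continuous_toLp 2 (fun _ : Fin (n + 1) => ℝ)).comp h

lemma tOf_continuous : Continuous (tOf (n := n)) :=
  P_continuous.comp (continuous_pi fun j =>
    ((continuous_apply j).comp (PiLp.continuous_ofLp 2 _)).neg)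

lemma bwd_continuous : Continuous (bwdFun (n := n)) := by
  have h : Continuous (fun y : EuclideanSpace ℝ (Fin (n + 1)) =>
      ((fun i => bwdFun y i) : Fin (n + 2) → ℝ)) := by
    refine continuous_pi fun i => ?_
    induction i using Fin.cases with
    | zero =>
      simp only [bwdFun_zero]
      exact tOf_continuous
    | succ j =>
      simp only [bwdFun_succ]
      exact (((continuous_apply j).comp (PiLp.continuous_ofLp 2 _))).add tOf_continuous
  exact (PiLp.continuous_toLp 2 (fun _ : Fin (n + 2) => ℝ)).comp h

end GPS

namespace GPS

/-- The homeomorphism between the global path space and the level set `{g = 1}`. -/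
noncomputable def pathSpaceHomeoLevel (n : ℕ) :
    ↥{x : EuclideanSpace ℝ (Fin (n + 2)) |
        (∀ i, x i ∈ Set.Icc (0 : ℝ) 1) ∧ (∃ i, x i = 0) ∧ (∃ i, x i = 1)} ≃ₜ
      ↥{y : EuclideanSpace ℝ (Fin (n + 1)) | g y = 1} where
  toFun x := ⟨fwdFun x.1, g_fwd x.2.1 x.2.2.1 x.2.2.2⟩
  invFun y := ⟨bwdFun y.1, bwd_mem_Icc y.2, bwd_exists_zero y.2, bwd_exists_one y.2⟩
  left_inv x := Subtype.ext (bwd_fwd x.2.1 x.2.2.1)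
  right_inv y := Subtype.ext (fwd_bwd y.1)
  continuous_toFun := (fwd_continuous.comp continuous_subtype_val).subtype_mk _
  continuous_invFun := (bwd_continuous.comp continuous_subtype_val).subtype_mk _

end GPS

/-- For `r ≥ 2`, the "global path space"
`S = {x ∈ [0,1]^r : min_i x_i = 0 and max_i x_i = 1}` (points of the unit cube with at least
one coordinate equal to `0` and at least one coordinate equal to `1`) is homeomorphic to the
standard sphere `S^{r-2}`, realized as the unit sphere in `ℝ^{r-1}`. -/
theorem globalPathSpace_homeomorph_sphere (r : ℕ) (hr : 2 ≤ r) :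
    Nonempty
      (↥{x : EuclideanSpace ℝ (Fin r) |
          (∀ i, x i ∈ Set.Icc (0 : ℝ) 1) ∧ (∃ i, x i = 0) ∧ (∃ i, x i = 1)} ≃ₜ
        Metric.sphere (0 : EuclideanSpace ℝ (Fin (r - 1))) 1) := by
  obtain ⟨n, rfl⟩ : ∃ n, r = n + 2 := ⟨r - 2, by omega⟩
  obtain ⟨h, -, -, hfr⟩ :=
    exists_homeomorph_image_interior_closure_frontier_eq_unitBall
      (GPS.K_convex (n := n)) GPS.K_interior_nonempty GPS.K_bounded
  have hset : {y : EuclideanSpace ℝ (Fin (n + 1)) | GPS.g y = 1} = frontier (GPS.K n) :=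
    GPS.K_frontier.symm
  exact ⟨(GPS.pathSpaceHomeoLevel n).trans <| (Homeomorph.setCongr hset).trans <|
    (h.image (frontier (GPS.K n))).trans (Homeomorph.setCongr hfr)⟩
end

section
/- Let u = (u_1,...,u_r) ∈ (0,1]^r with u_1 ≤ u_2 ≤ ... ≤ u_r. Then the lexicographic ordering of the facets of Δ_u (each facet identified with its increasing tuple of vertices) is a shelling: for every pair of facets C_a ≺ C_k there exist a facet C_b ≺ C_k and an element x ∈ C_k such that C_a ∩ C_k ⊆ C_b ∩ C_k = C_k \ {x}. -/
open Finset

variable {r : ℕ}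

/-- `F` is a face of the induced complex `Δ_u`: the complement of `F` has `u`-weight `> 1`. -/
def IsFaceOf (u : Fin r → ℝ) (F : Finset (Fin r)) : Prop := 1 < ∑ i ∈ Fᶜ, u i

/-- `C` is a facet (maximal face) of `Δ_u`. -/
def IsFacetOf (u : Fin r → ℝ) (C : Finset (Fin r)) : Prop :=
  IsFaceOf u C ∧ ∀ F : Finset (Fin r), IsFaceOf u F → C ⊆ F → F = C

/-- The lexicographic order on facets, comparing the increasing lists of their vertices. -/
def FacetLex (C C' : Finset (Fin r)) : Prop :=
  List.Lex (· < ·) (C.sort (· ≤ ·)) (C'.sort (· ≤ ·))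

/-- Irreflexivity of list lex order for `<`. -/
lemma myLexIrrefl {α : Type*} [LinearOrder α] : ∀ l : List α, ¬ List.Lex (· < ·) l l := by
  intro l h
  induction l with
  | nil => cases h
  | cons a t ih =>
    cases h with
    | cons h => exact ih h
    | rel h => exact lt_irrefl _ h

/-- If `m` separates two strictly sorted lists in the right way, we get lex order. -/
lemma lex_of_min {α : Type*} [LinearOrder α] :
    ∀ (l₁ l₂ : List α), l₁.Pairwise (· < ·) → l₂.Pairwise (· < ·) →
    ∀ m, m ∈ l₁ → m ∉ l₂ → (∀ y ∈ l₁, y < m → y ∈ l₂) → (∀ y ∈ l₂, y < m → y ∈ l₁) →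
    (∃ b ∈ l₂, m < b) → List.Lex (· < ·) l₁ l₂ := by
  intro l₁
  induction l₁ with
  | nil => intro l₂ _ _ m hm; cases hm
  | cons a t₁ ih =>
    intro l₂ h₁ h₂ m hm hm₂ hlow₁ hlow₂ hb
    cases l₂ with
    | nil => obtain ⟨b, hb, _⟩ := hb; cases hb
    | cons b t₂ =>
      rcases lt_trichotomy a b with hab | hab | hab
      · exact List.Lex.rel hab
      · subst hab
        have ham : a < m := by
          rcases List.mem_cons.1 hm with rfl | hmt
          · exact absurd (List.mem_cons_self) hm₂
          · exact (List.pairwise_cons.1 h₁).1 m hmt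
        have hmt₁ : m ∈ t₁ := by
          rcases List.mem_cons.1 hm with rfl | hmt
          · exact absurd rfl (ne_of_gt ham)
          · exact hmt
        refine List.Lex.cons (ih t₂ (List.pairwise_cons.1 h₁).2 (List.pairwise_cons.1 h₂).2 m hmt₁
          (fun h => hm₂ (List.mem_cons_of_mem _ h)) ?_ ?_ ?_)
        · intro y hy hym
          have := hlow₁ y (List.mem_cons_of_mem _ hy) hym
          rcases List.mem_cons.1 this with rfl | h
          · exact absurd hy (fun hc => lt_irrefl _ ((List.pairwise_cons.1 h₁).1 _ hc))
          · exact h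
        · intro y hy hym
          have := hlow₂ y (List.mem_cons_of_mem _ hy) hym
          rcases List.mem_cons.1 this with rfl | h
          · exact absurd hy (fun hc => lt_irrefl _ ((List.pairwise_cons.1 h₂).1 _ hc))
          · exact h
        · obtain ⟨c, hc, hmc⟩ := hb
          rcases List.mem_cons.1 hc with rfl | h
          · exact absurd (ham.trans hmc) (lt_irrefl _)
          · exact ⟨c, h, hmc⟩
      · -- b < a : contradiction
        exfalso
        have ham : a ≤ m := by
          rcases List.mem_cons.1 hm with rfl | hmt
          · exact le_rfl
          · exact le_of_lt ((List.pairwise_cons.1 h₁).1 m hmt)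
        have hbm : b < m := lt_of_lt_of_le hab ham
        have : b ∈ a :: t₁ := hlow₂ b (List.mem_cons_self) hbm
        rcases List.mem_cons.1 this with rfl | h
        · exact lt_irrefl _ hab
        · exact lt_irrefl _ (hab.trans ((List.pairwise_cons.1 h₁).1 b h))

/-- From lex order on strictly sorted lists, extract containment or a separating element. -/
lemma min_of_lex {α : Type*} [LinearOrder α] :
    ∀ (l₁ l₂ : List α), l₁.Pairwise (· < ·) → l₂.Pairwise (· < ·) →
    List.Lex (· < ·) l₁ l₂ →
    (∀ a ∈ l₁, a ∈ l₂) ∨ ∃ m ∈ l₁, m ∉ l₂ ∧ ∀ y ∈ l₂, y < m → y ∈ l₁ := by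
  intro l₁
  induction l₁ with
  | nil => intro l₂ _ _ _; exact Or.inl (fun a ha => absurd ha (List.not_mem_nil))
  | cons a t₁ ih =>
    intro l₂ h₁ h₂ hlex
    cases hlex with
    | @cons _ _ t₂ h =>
      rcases ih t₂ (List.pairwise_cons.1 h₁).2 (List.pairwise_cons.1 h₂).2 h with hsub | ⟨m, hm, hm₂, hlow⟩
      · left
        intro x hx
        rcases List.mem_cons.1 hx with rfl | hxt
        · exact List.mem_cons_self
        · exact List.mem_cons_of_mem _ (hsub x hxt)
      · right
        have ham : a < m := (List.pairwise_cons.1 h₁).1 m hm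
        refine ⟨m, List.mem_cons_of_mem _ hm, ?_, ?_⟩
        · intro hc
          rcases List.mem_cons.1 hc with rfl | h'
          · exact lt_irrefl _ ham
          · exact hm₂ h'
        · intro y hy hym
          rcases List.mem_cons.1 hy with rfl | h'
          · exact List.mem_cons_self
          · exact List.mem_cons_of_mem _ (hlow y h' hym)
    | @rel _ _ b t₂ hab =>
      right
      refine ⟨a, List.mem_cons_self, ?_, ?_⟩
      · intro hc
        rcases List.mem_cons.1 hc with rfl | h'
        · exact lt_irrefl _ hab
        · exact lt_irrefl _ (hab.trans ((List.pairwise_cons.1 h₂).1 a h'))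
      · intro y hy hya
        exfalso
        rcases List.mem_cons.1 hy with rfl | h'
        · exact lt_irrefl _ (hya.trans hab)
        · exact lt_irrefl _ ((hya.trans hab).trans ((List.pairwise_cons.1 h₂).1 y h'))

/-- Every face is contained in a facet. -/
lemma exists_facet_of_face (u : Fin r → ℝ) (F : Finset (Fin r)) (hF : IsFaceOf u F) :
    ∃ C : Finset (Fin r), IsFacetOf u C ∧ F ⊆ C := by
  have hfin : {G : Finset (Fin r) | IsFaceOf u G ∧ F ⊆ G}.Finite := Set.toFinite _
  obtain ⟨C, ⟨hCface, hFC⟩, hmax⟩ :=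
    Set.Finite.exists_maximalFor id _ hfin ⟨F, hF, Finset.Subset.refl F⟩
  refine ⟨C, ⟨hCface, ?_⟩, hFC⟩
  intro G hG hCG
  exact Finset.Subset.antisymm (hmax ⟨hG, hFC.trans hCG⟩ hCG) hCG

/-- Let `u = (u₁,…,u_r) ∈ (0,1]^r` with `u₁ ≤ u₂ ≤ … ≤ u_r`.  The
lexicographic ordering of the facets of `Δ_u` is a shelling: for any facets `C_a ≺ C_k`
there are a facet `C_b ≺ C_k` and `x ∈ C_k` with
`C_a ∩ C_k ⊆ C_b ∩ C_k = C_k \ {x}`. -/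
theorem lex_order_is_shelling (u : Fin r → ℝ)
    (hu : ∀ i, u i ∈ Set.Ioc (0 : ℝ) 1) (hmono : Monotone u)
    (Ca Ck : Finset (Fin r)) (hCa : IsFacetOf u Ca) (hCk : IsFacetOf u Ck)
    (hlt : FacetLex Ca Ck) :
    ∃ Cb : Finset (Fin r), IsFacetOf u Cb ∧ FacetLex Cb Ck ∧
      ∃ x ∈ Ck, Ca ∩ Ck ⊆ Cb ∩ Ck ∧ Cb ∩ Ck = Ck.erase x := by
  classical
  rcases min_of_lex _ _ (Finset.sortedLT_sort Ca).pairwise (Finset.sortedLT_sort Ck).pairwise hlt with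
    hsub | ⟨s, hs₁, hs₂, hs₃⟩
  · -- Ca ⊆ Ck : impossible since Ca is a facet
    exfalso
    have hsub' : Ca ⊆ Ck := fun a ha =>
      (Finset.mem_sort _).1 (hsub a ((Finset.mem_sort _).2 ha))
    have heq : Ck = Ca := hCa.2 Ck hCk.1 hsub'
    rw [heq] at hlt
    exact myLexIrrefl _ hlt
  · have hsCa : s ∈ Ca := (Finset.mem_sort _).1 hs₁
    have hsCk : s ∉ Ck := fun h => hs₂ ((Finset.mem_sort _).2 h)
    have hlow : ∀ y ∈ Ck, y < s → y ∈ Ca := fun y hy hys =>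
      (Finset.mem_sort _).1 (hs₃ y ((Finset.mem_sort _).2 hy) hys)
    -- Ck \ Ca is nonempty
    have hne : (Ck \ Ca).Nonempty := by
      rw [Finset.sdiff_nonempty]
      intro h
      have : Ca = Ck := hCk.2 Ca hCa.1 h
      exact hsCk (this ▸ hsCa)
    set x := (Ck \ Ca).min' hne with hxdef
    have hx : x ∈ Ck \ Ca := Finset.min'_mem _ hne
    have hxCk : x ∈ Ck := (Finset.mem_sdiff.1 hx).1
    have hxCa : x ∉ Ca := (Finset.mem_sdiff.1 hx).2
    have hsx : s < x := by
      rcases lt_trichotomy s x with h | h | h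
      · exact h
      · exact absurd (h ▸ hxCk) hsCk
      · exact absurd (hlow x hxCk h) hxCa
    -- The candidate face C'
    set C' := insert s (Ck.erase x) with hC'def
    have hsnotin : s ∉ Ck.erase x := fun h => hsCk (Finset.mem_of_mem_erase h)
    have hface : IsFaceOf u C' := by
      unfold IsFaceOf
      have hcompl : C'ᶜ = (insert x Ckᶜ).erase s := by
        rw [hC'def, Finset.compl_insert, Finset.compl_erase]
      have hsmem : s ∈ insert x Ckᶜ :=
        Finset.mem_insert_of_mem (Finset.mem_compl.2 hsCk)
      have hxnot : x ∉ Ckᶜ := by simp [Finset.mem_compl, hxCk]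
      rw [hcompl, Finset.sum_erase_eq_sub hsmem, Finset.sum_insert hxnot]
      have h1 : 1 < ∑ i ∈ Ckᶜ, u i := hCk.1
      have h2 : u s ≤ u x := hmono (le_of_lt hsx)
      linarith
    obtain ⟨Cb, hCbfacet, hsubCb⟩ := exists_facet_of_face u C' hface
    -- x ∉ Cb
    have hxCb : x ∉ Cb := by
      intro hxCb
      have hCkCb : Ck ⊆ Cb := by
        intro y hy
        by_cases hyx : y = x
        · exact hyx ▸ hxCb
        · exact hsubCb (Finset.mem_insert_of_mem (Finset.mem_erase.2 ⟨hyx, hy⟩))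
      have : Cb = Ck := hCk.2 Cb hCbfacet.1 hCkCb
      exact hsCk (this ▸ hsubCb (Finset.mem_insert_self _ _))
    have hinter : Cb ∩ Ck = Ck.erase x := by
      apply Finset.Subset.antisymm
      · intro y hy
        refine Finset.mem_erase.2 ⟨?_, (Finset.mem_inter.1 hy).2⟩
        intro h
        exact hxCb (h ▸ (Finset.mem_inter.1 hy).1)
      · intro y hy
        exact Finset.mem_inter.2
          ⟨hsubCb (Finset.mem_insert_of_mem hy), Finset.mem_of_mem_erase hy⟩
    have hsCb : s ∈ Cb := hsubCb (Finset.mem_insert_self _ _)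
    -- lex order Cb ≺ Ck
    have hmne : (Cb \ Ck).Nonempty := ⟨s, Finset.mem_sdiff.2 ⟨hsCb, hsCk⟩⟩
    set m := (Cb \ Ck).min' hmne with hmdef
    have hm : m ∈ Cb \ Ck := Finset.min'_mem _ hmne
    have hms : m ≤ s := Finset.min'_le _ _ (Finset.mem_sdiff.2 ⟨hsCb, hsCk⟩)
    have hmx : m < x := lt_of_le_of_lt hms hsx
    have hlex : FacetLex Cb Ck := by
      apply lex_of_min _ _ (Finset.sortedLT_sort Cb).pairwise (Finset.sortedLT_sort Ck).pairwise m
      · exact (Finset.mem_sort _).2 (Finset.mem_sdiff.1 hm).1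
      · exact fun h => (Finset.mem_sdiff.1 hm).2 ((Finset.mem_sort _).1 h)
      · intro y hy hym
        refine (Finset.mem_sort _).2 ?_
        by_contra hyCk
        have hyCb : y ∈ Cb \ Ck := Finset.mem_sdiff.2 ⟨(Finset.mem_sort _).1 hy, hyCk⟩
        exact absurd (Finset.min'_le _ _ hyCb) (not_le.2 hym)
      · intro y hy hym
        have hyCk : y ∈ Ck := (Finset.mem_sort _).1 hy
        have hyx : y ≠ x := ne_of_lt (hym.trans hmx)
        exact (Finset.mem_sort _).2
          (hsubCb (Finset.mem_insert_of_mem (Finset.mem_erase.2 ⟨hyx, hyCk⟩)))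
      · exact ⟨x, (Finset.mem_sort _).2 hxCk, hmx⟩
    refine ⟨Cb, hCbfacet, hlex, x, hxCk, ?_, hinter⟩
    rw [hinter]
    intro y hy
    have hyCa : y ∈ Ca := (Finset.mem_inter.1 hy).1
    have hyCk : y ∈ Ck := (Finset.mem_inter.1 hy).2
    refine Finset.mem_erase.2 ⟨?_, hyCk⟩
    intro h
    exact hxCa (h ▸ hyCa)
end

section
/- Let n ≥ 4 and w = (1, 1, w_3, ..., w_n) ∈ (0,1]^n with ∑_{i=3}^n w_i ≤ 1. Then every w-stable n-marked genus 0 tree with marks 1 and 2 on distinct leaves is a path (has exactly two leaves), with mark 1 on one leaf and mark 2 on the other; in particular no vertex other than the two leaves carries mark 1 or 2. -/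
open Finset

private lemma deg_pos_of_tree {V : Type*} [Fintype V] [DecidableEq V]
    (G : SimpleGraph V) [DecidableRel G.Adj] (htree : G.IsTree)
    {a b : V} (hab : a ≠ b) (v : V) : 0 < G.degree v := by
  obtain ⟨u, hu⟩ : ∃ u, u ≠ v := by
    rcases eq_or_ne a v with rfl | h
    · exact ⟨b, fun h => hab h.symm⟩
    · exact ⟨a, h⟩
  obtain ⟨p⟩ := (htree.isConnected.preconnected v u)
  rw [SimpleGraph.degree_pos_iff_exists_adj]
  exact ⟨_, p.adj_snd (SimpleGraph.Walk.not_nil_of_ne (fun h => hu h.symm))⟩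

private lemma deg_one_aux {V : Type*} [Fintype V] [DecidableEq V]
    (G : SimpleGraph V) [DecidableRel G.Adj] (htree : G.IsTree)
    {a b : V} (hab : a ≠ b)
    (hleaf : ∀ v : V, G.degree v = 1 → v = a ∨ v = b) : G.degree a = 1 := by
  by_contra hda
  have hdpos := deg_pos_of_tree G htree hab
  have h2 : ∀ v ∈ Finset.univ.erase b, 2 ≤ G.degree v := by
    intro v hv
    have hvb : v ≠ b := (Finset.mem_erase.1 hv).1
    have := hdpos v
    rcases Nat.lt_or_ge (G.degree v) 2 with h | h
    · have h1 : G.degree v = 1 := by omega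
      rcases hleaf v h1 with rfl | rfl
      · omega
      · exact absurd rfl hvb
    · exact h
  have hE := htree.card_edgeFinset
  have hsum : ∑ v, G.degree v = 2 * (Fintype.card V - 1) := by
    rw [SimpleGraph.sum_degrees_eq_twice_card_edges]; omega
  have hcard : 2 ≤ Fintype.card V := Fintype.one_lt_card_iff_nontrivial.2 ⟨⟨a, b, hab⟩⟩
  have hsplit : ∑ v, G.degree v = G.degree b + ∑ v ∈ Finset.univ.erase b, G.degree v := by
    rw [Finset.add_sum_erase _ (fun v => G.degree v) (Finset.mem_univ b)]
  have hge : 2 * (Fintype.card V - 1) ≤ ∑ v ∈ Finset.univ.erase b, G.degree v := by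
    calc 2 * (Fintype.card V - 1) = ∑ _v ∈ Finset.univ.erase b, 2 := by
          rw [Finset.sum_const, Finset.card_erase_of_mem (Finset.mem_univ b),
            Finset.card_univ, smul_eq_mul, mul_comm]
      _ ≤ _ := Finset.sum_le_sum h2
  have hbpos := hdpos b
  omega

/-- Let `n ≥ 4` and `w = (1, 1, w₃, …, w_n) ∈ (0,1]ⁿ` with
`∑_{i=3}^n w_i ≤ 1`.  Then every `w`-stable `n`-marked genus-0 tree carrying marks `1` and
`2` on distinct vertices is a path: it has exactly two leaves, with mark `1` on one leaf and
mark `2` on the other (in particular no other vertex carries mark `1` or `2`).  Stability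
means every vertex `v` satisfies `deg v + ∑_{i ∈ m⁻¹(v)} w_i > 2`. -/
theorem stable_tree_is_path
    {n : ℕ} (hn : 4 ≤ n) (w : Fin n → ℝ)
    (hw : ∀ i, w i ∈ Set.Ioc (0 : ℝ) 1)
    (hw1 : w ⟨0, by omega⟩ = 1) (hw2 : w ⟨1, by omega⟩ = 1)
    (hlight : ∑ i ∈ Finset.univ.filter (fun i : Fin n => 2 ≤ (i : ℕ)), w i ≤ 1)
    {V : Type*} [Fintype V] [DecidableEq V]
    (G : SimpleGraph V) [DecidableRel G.Adj] (htree : G.IsTree)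
    (m : Fin n → V)
    (hstable : ∀ v : V,
      (2 : ℝ) < (G.degree v : ℝ) + ∑ i ∈ Finset.univ.filter (fun i => m i = v), w i)
    (h12 : m ⟨0, by omega⟩ ≠ m ⟨1, by omega⟩) :
    G.degree (m ⟨0, by omega⟩) = 1 ∧ G.degree (m ⟨1, by omega⟩) = 1 ∧
      ∀ v : V, G.degree v = 1 → v = m ⟨0, by omega⟩ ∨ v = m ⟨1, by omega⟩ := by
  set a := m ⟨0, by omega⟩ with ha
  set b := m ⟨1, by omega⟩ with hb
  have hleaf : ∀ v : V, G.degree v = 1 → v = a ∨ v = b := by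
    intro v hv
    by_contra hcon
    push_neg at hcon
    obtain ⟨hva, hvb⟩ := hcon
    have hsub : Finset.univ.filter (fun i => m i = v) ⊆
        Finset.univ.filter (fun i : Fin n => 2 ≤ (i : ℕ)) := by
      intro i hi
      simp only [Finset.mem_filter, Finset.mem_univ, true_and] at hi ⊢
      by_contra h2
      interval_cases h : (i : ℕ)
      · have : i = ⟨0, by omega⟩ := Fin.ext h
        exact hva (by rw [← hi, this])
      · have : i = ⟨1, by omega⟩ := Fin.ext h
        exact hvb (by rw [← hi, this])
    have hle : ∑ i ∈ Finset.univ.filter (fun i => m i = v), w i ≤ 1 := by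
      refine le_trans (Finset.sum_le_sum_of_subset_of_nonneg hsub ?_) hlight
      intro i _ _
      exact (hw i).1.le
    have := hstable v
    rw [hv] at this
    norm_num at this
    linarith
  refine ⟨deg_one_aux G htree h12 hleaf, deg_one_aux G htree h12.symm ?_, hleaf⟩
  intro v hv
  exact (hleaf v hv).symm
end
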